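/- Let N ≥ 1, σ > 0, and let ψ : [0,2] → ℝ be a nonnegative strictly decreasing C¹ function with ψ(2) = 0. Suppose x_i, v_i : [0,∞) → ℝ³ (1 ≤ i ≤ N) form a solution of the Cucker–Smale type flocking model on the unit sphere with inter-particle bonding force, i.e., ‖x_i(t)‖ = 1, ⟨x_i(t), v_i(t)⟩ = 0, x_i(t) ≠ −x_k(t) for all i, k and t ≥ 0, and ẋ_i = v_i, v̇_i = −‖v_i‖² x_i + (1/N) Σ_{k=1}^N ψ_{ik} (R_{x_k→x_i}(v_k) − v_i) + (σ/N) Σ_{k=1}^N (x_k − ⟨x_i,x_k⟩ x_i), where ψ_{ik} := ψ(‖x_i − x_k‖). Fix t > 0 and suppose there is a constant ψ_m > 0 such that ψ_{ij}(s) ≥ ψ_m for all 1 ≤ i, j ≤ N and all s ∈ [0, t]. Then, with 𝒱(s) := max_k ‖v_k(s)‖, 𝒟ₓ(s) := max_{i,j} ‖x_i(s) − x_j(s)‖, and E_K(s) := (1/N) Σ_{k=1}^N ‖v_k(s)‖², one has 𝒱²(t) ≤ e^{−ψ_m t/2} 𝒱²(0) + (1 − e^{−ψ_m t/2}) ( 2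 sup_{0 ≤ s ≤ t} E_K(s) + (4σ²/ψ_m²) sup_{0 ≤ s ≤ t} 𝒟ₓ²(s) ). -/

import Mathlib

open Matrix Set
open scoped BigOperators

noncomputable section

/-- The Euclidean norm on `ℝ³`, realized as `Fin 3 → ℝ`. -/
def enorm3 (a : Fin 3 → ℝ) : ℝ := Real.sqrt (a ⬝ᵥ a)

/-- The cross product on `ℝ³`. -/
def cross3 (a b : Fin 3 → ℝ) : Fin 3 → ℝ :=
  ![a 1 * b 2 - a 2 * b 1, a 2 * b 0 - a 0 * b 2, a 0 * b 1 - a 1 * b 0]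

/-- The unit vector `u = (z₁ × z₂)/‖z₁ × z₂‖`. -/
def uvec3 (z₁ z₂ : Fin 3 → ℝ) : Fin 3 → ℝ := (enorm3 (cross3 z₁ z₂))⁻¹ • cross3 z₁ z₂

/-- The rotation matrix `R(z₁,z₂) = ⟨z₁,z₂⟩ I + z₂ z₁ᵀ − z₁ z₂ᵀ + (1 − ⟨z₁,z₂⟩) u uᵀ`. -/
def rotMatrix (z₁ z₂ : Fin 3 → ℝ) : Matrix (Fin 3) (Fin 3) ℝ :=
  (z₁ ⬝ᵥ z₂) • (1 : Matrix (Fin 3) (Fin 3) ℝ)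
    + vecMulVec z₂ z₁ - vecMulVec z₁ z₂
    + (1 - z₁ ⬝ᵥ z₂) • vecMulVec (uvec3 z₁ z₂) (uvec3 z₁ z₂)

/-- `R_{z₁→z₂}(v)`, with the convention `R_{z→z} = I`. -/
def rotApply (z₁ z₂ v : Fin 3 → ℝ) : Fin 3 → ℝ :=
  if z₁ = z₂ then v else (rotMatrix z₁ z₂).mulVec v

lemma dot_expand (a b : Fin 3 → ℝ) : a ⬝ᵥ b = a 0 * b 0 + a 1 * b 1 + a 2 * b 2 := by
  simp [dotProduct, Fin.sum_univ_three]

lemma dot_self_nonneg (a : Fin 3 → ℝ) : 0 ≤ a ⬝ᵥ a := by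
  rw [dot_expand]
  nlinarith [sq_nonneg (a 0), sq_nonneg (a 1), sq_nonneg (a 2)]

lemma enorm3_nonneg (a : Fin 3 → ℝ) : 0 ≤ enorm3 a := Real.sqrt_nonneg _

lemma enorm3_sq (a : Fin 3 → ℝ) : enorm3 a ^ 2 = a ⬝ᵥ a := Real.sq_sqrt (dot_self_nonneg a)

lemma enorm3_mul_self (a : Fin 3 → ℝ) : enorm3 a * enorm3 a = a ⬝ᵥ a :=
  Real.mul_self_sqrt (dot_self_nonneg a)

lemma dot_self_eq_zero {a : Fin 3 → ℝ} (h : a ⬝ᵥ a = 0) : a = 0 := by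
  rw [dot_expand] at h
  have h0 : a 0 = 0 := by nlinarith [sq_nonneg (a 0), sq_nonneg (a 1), sq_nonneg (a 2)]
  have h1 : a 1 = 0 := by nlinarith [sq_nonneg (a 0), sq_nonneg (a 1), sq_nonneg (a 2)]
  have h2 : a 2 = 0 := by nlinarith [sq_nonneg (a 0), sq_nonneg (a 1), sq_nonneg (a 2)]
  funext j
  fin_cases j <;> simpa

lemma cauchy3 (a b : Fin 3 → ℝ) : a ⬝ᵥ b ≤ enorm3 a * enorm3 b := by
  have h2 : (a ⬝ᵥ b)^2 ≤ (a ⬝ᵥ a) * (b ⬝ᵥ b) := by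
    simp only [dot_expand]
    nlinarith [sq_nonneg (a 0 * b 1 - a 1 * b 0), sq_nonneg (a 0 * b 2 - a 2 * b 0),
      sq_nonneg (a 1 * b 2 - a 2 * b 1)]
  calc a ⬝ᵥ b ≤ |a ⬝ᵥ b| := le_abs_self _
    _ = Real.sqrt ((a ⬝ᵥ b)^2) := (Real.sqrt_sq_eq_abs _).symm
    _ ≤ Real.sqrt ((a ⬝ᵥ a) * (b ⬝ᵥ b)) := Real.sqrt_le_sqrt h2
    _ = enorm3 a * enorm3 b := by
        rw [Real.sqrt_mul (dot_self_nonneg a)]; rfl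

lemma cauchy3_abs (a b : Fin 3 → ℝ) : |a ⬝ᵥ b| ≤ enorm3 a * enorm3 b := by
  rcases abs_cases (a ⬝ᵥ b) with ⟨he, _⟩ | ⟨he, _⟩
  · rw [he]; exact cauchy3 a b
  · rw [he]
    have := cauchy3 a (-b)
    have hb : a ⬝ᵥ (-b) = -(a ⬝ᵥ b) := by simp [dot_expand]
    have hnb : enorm3 (-b) = enorm3 b := by
      unfold enorm3; congr 1; simp [dot_expand]
    rw [hb, hnb] at this; exact this

lemma enorm3_sub_le (a b : Fin 3 → ℝ) : enorm3 (a - b) ≤ enorm3 a + enorm3 b := by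
  have h : (a - b) ⬝ᵥ (a - b) ≤ (enorm3 a + enorm3 b)^2 := by
    have hc := neg_le_of_abs_le (cauchy3_abs a b)
    have : (a - b) ⬝ᵥ (a - b) = a ⬝ᵥ a - 2 * (a ⬝ᵥ b) + b ⬝ᵥ b := by
      simp only [dot_expand]; simp [Pi.sub_apply]; ring
    rw [this, ← enorm3_sq a, ← enorm3_sq b]
    nlinarith
  calc enorm3 (a - b) = Real.sqrt ((a-b) ⬝ᵥ (a-b)) := rfl
    _ ≤ Real.sqrt ((enorm3 a + enorm3 b)^2) := Real.sqrt_le_sqrt h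
    _ = |enorm3 a + enorm3 b| := Real.sqrt_sq_eq_abs _
    _ = enorm3 a + enorm3 b := abs_of_nonneg (add_nonneg (enorm3_nonneg a) (enorm3_nonneg b))

lemma cross3_c0 (a b : Fin 3 → ℝ) : cross3 a b 0 = a 1 * b 2 - a 2 * b 1 := rfl
lemma cross3_c1 (a b : Fin 3 → ℝ) : cross3 a b 1 = a 2 * b 0 - a 0 * b 2 := rfl
lemma cross3_c2 (a b : Fin 3 → ℝ) : cross3 a b 2 = a 0 * b 1 - a 1 * b 0 := rfl

lemma cross_dot_left (a b : Fin 3 → ℝ) : cross3 a b ⬝ᵥ a = 0 := by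
  simp only [dot_expand, cross3_c0, cross3_c1, cross3_c2]; ring

lemma cross_dot_right (a b : Fin 3 → ℝ) : cross3 a b ⬝ᵥ b = 0 := by
  simp only [dot_expand, cross3_c0, cross3_c1, cross3_c2]; ring

lemma lagrange3 (a b : Fin 3 → ℝ) :
    cross3 a b ⬝ᵥ cross3 a b = (a ⬝ᵥ a) * (b ⬝ᵥ b) - (a ⬝ᵥ b)^2 := by
  simp only [dot_expand, cross3_c0, cross3_c1, cross3_c2]; ring

lemma key_identity (a b p : Fin 3 → ℝ) :
    (cross3 a b ⬝ᵥ cross3 a b) * (p ⬝ᵥ p)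
      = (cross3 a b ⬝ᵥ p)^2 + (b ⬝ᵥ b) * (a ⬝ᵥ p)^2 + (a ⬝ᵥ a) * (b ⬝ᵥ p)^2
        - 2 * (a ⬝ᵥ b) * (a ⬝ᵥ p) * (b ⬝ᵥ p) := by
  simp only [dot_expand, cross3_c0, cross3_c1, cross3_c2]; ring

lemma vecMulVec_mulVec3 (x y w : Fin 3 → ℝ) :
    (Matrix.vecMulVec x y).mulVec w = (y ⬝ᵥ w) • x := by
  funext i
  simp only [Matrix.mulVec, Matrix.vecMulVec_apply, dotProduct, Pi.smul_apply,
    smul_eq_mul, Finset.sum_mul]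
  exact Finset.sum_congr rfl (fun j _ => by ring)

lemma dot_comm3 (a b : Fin 3 → ℝ) : a ⬝ᵥ b = b ⬝ᵥ a := by
  simp [dot_expand]; ring

lemma rotApply_eq (z₁ z₂ w : Fin 3 → ℝ) (h : z₁ ≠ z₂) :
    rotApply z₁ z₂ w
      = (z₁ ⬝ᵥ z₂) • w + (z₁ ⬝ᵥ w) • z₂ - (z₂ ⬝ᵥ w) • z₁
        + ((1 - z₁ ⬝ᵥ z₂) * (uvec3 z₁ z₂ ⬝ᵥ w)) • uvec3 z₁ z₂ := by
  rw [rotApply, if_neg h]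
  unfold rotMatrix
  rw [Matrix.add_mulVec, Matrix.sub_mulVec, Matrix.add_mulVec, Matrix.smul_mulVec,
    Matrix.one_mulVec, Matrix.smul_mulVec, vecMulVec_mulVec3, vecMulVec_mulVec3,
    vecMulVec_mulVec3, smul_smul]

lemma eq_of_dot_one {z₁ z₂ : Fin 3 → ℝ} (h1 : z₁ ⬝ᵥ z₁ = 1) (h2 : z₂ ⬝ᵥ z₂ = 1)
    (h : z₁ ⬝ᵥ z₂ = 1) : z₁ = z₂ := by
  have hz : (z₁ - z₂) ⬝ᵥ (z₁ - z₂) = 0 := by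
    simp only [dot_expand] at *
    simp only [Pi.sub_apply]
    nlinarith
  have := dot_self_eq_zero hz
  funext j
  have := congrFun this j
  simpa [sub_eq_zero] using this

lemma rot_dot_self {z₁ z₂ : Fin 3 → ℝ} (v : Fin 3 → ℝ) (h1 : z₁ ⬝ᵥ z₁ = 1) (h2 : z₂ ⬝ᵥ z₂ = 1)
    (hne : z₁ ≠ -z₂) : rotApply z₁ z₂ v ⬝ᵥ rotApply z₁ z₂ v = v ⬝ᵥ v := by
  by_cases heq : z₁ = z₂
  · rw [rotApply, if_pos heq]
  set c := z₁ ⬝ᵥ z₂ with hc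
  set cr := cross3 z₁ z₂ with hcr
  have hq : cr ⬝ᵥ cr = 1 - c ^ 2 := by rw [hcr, lagrange3, h1, h2]; ring
  have hc1 : c ≠ 1 := fun h => heq (eq_of_dot_one h1 h2 h)
  have hcm1 : c ≠ -1 := by
    intro h
    apply hne
    have hn2 : (-z₂) ⬝ᵥ (-z₂) = 1 := by simpa [dot_expand] using h2
    refine eq_of_dot_one h1 hn2 ?_
    simp only [dot_expand] at *
    simp only [Pi.neg_apply]
    nlinarith
  have hqpos : 0 < cr ⬝ᵥ cr := by
    rw [hq]
    have habs : |c| ≤ 1 := by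
      have := cauchy3_abs z₁ z₂
      have e1 : enorm3 z₁ = 1 := by unfold enorm3; rw [h1, Real.sqrt_one]
      have e2 : enorm3 z₂ = 1 := by unfold enorm3; rw [h2, Real.sqrt_one]
      rw [e1, e2, ← hc] at this; linarith
    have h1' := abs_le.mp habs
    rcases lt_or_eq_of_le h1'.1 with h | h
    · rcases lt_or_eq_of_le h1'.2 with h' | h'
      · nlinarith
      · exact absurd h' hc1
    · exact absurd h.symm hcm1
  have hqne : cr ⬝ᵥ cr ≠ 0 := ne_of_gt hqpos
  set u := uvec3 z₁ z₂ with hu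
  have hsq : enorm3 cr * enorm3 cr = cr ⬝ᵥ cr := enorm3_mul_self cr
  have hcrnorm_pos : 0 < enorm3 cr := by
    rcases (enorm3_nonneg cr).lt_or_eq with h | h
    · exact h
    · exfalso; rw [← h, mul_zero] at hsq; exact hqne hsq.symm
  -- u dot facts
  have huu : u ⬝ᵥ u = 1 := by
    rw [hu]
    unfold uvec3
    rw [smul_dotProduct, dotProduct_smul, ← hcr]
    rw [smul_eq_mul, smul_eq_mul, ← mul_assoc, ← mul_inv, hsq]
    exact inv_mul_cancel₀ hqne
  have huz1 : u ⬝ᵥ z₁ = 0 := by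
    rw [hu]; unfold uvec3
    rw [smul_dotProduct, ← hcr, cross_dot_left, smul_eq_mul, mul_zero]
  have huz2 : u ⬝ᵥ z₂ = 0 := by
    rw [hu]; unfold uvec3
    rw [smul_dotProduct, ← hcr, cross_dot_right, smul_eq_mul, mul_zero]
  have hudv : ∀ w : Fin 3 → ℝ, u ⬝ᵥ w = (enorm3 cr)⁻¹ * (cr ⬝ᵥ w) := by
    intro w
    rw [hu]; unfold uvec3
    rw [smul_dotProduct, ← hcr, smul_eq_mul]
  set A := z₁ ⬝ᵥ v with hA
  set B := z₂ ⬝ᵥ v with hB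
  set Dv := u ⬝ᵥ v with hD
  have hDsq : Dv ^ 2 * (cr ⬝ᵥ cr) = (cr ⬝ᵥ v) ^ 2 := by
    rw [hD, hudv v, mul_pow,
      show ((enorm3 cr)⁻¹)^2 = (cr ⬝ᵥ cr)⁻¹ by rw [← hsq, mul_inv, sq],
      mul_comm ((cr ⬝ᵥ cr)⁻¹) _, mul_assoc, inv_mul_cancel₀ hqne, mul_one]
  -- key identity
  have hkey : (cr ⬝ᵥ cr) * (v ⬝ᵥ v) = (cr ⬝ᵥ v)^2 + A^2 + B^2 - 2 * c * A * B := by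
    have := key_identity z₁ z₂ v
    rw [← hcr, ← hc, ← hA, ← hB, h1, h2] at this
    rw [this]; ring
  -- expand rotApply
  rw [rotApply_eq z₁ z₂ v heq, ← hc, ← hu]
  simp only [add_dotProduct, sub_dotProduct, smul_dotProduct,
    dotProduct_add, dotProduct_sub, dotProduct_smul, smul_eq_mul]
  rw [← hA, ← hB, ← hD, h1, h2, ← hc]
  have e1 : z₂ ⬝ᵥ u = 0 := by rw [dot_comm3]; exact huz2
  have e2 : z₁ ⬝ᵥ u = 0 := by rw [dot_comm3]; exact huz1
  rw [dot_comm3 v z₁, dot_comm3 v z₂, dot_comm3 v u, dot_comm3 z₂ z₁,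
    ← hA, ← hB, ← hD, ← hc, e1, e2, huz1, huz2, huu]
  rw [hq] at hkey hDsq
  linear_combination hDsq - hkey

lemma dot_add3 (a b c : Fin 3 → ℝ) : a ⬝ᵥ (b + c) = a ⬝ᵥ b + a ⬝ᵥ c := by
  simp [dot_expand]

lemma dot_sub3 (a b c : Fin 3 → ℝ) : a ⬝ᵥ (b - c) = a ⬝ᵥ b - a ⬝ᵥ c := by
  simp [dot_expand]

lemma dot_smul3 (a : Fin 3 → ℝ) (c : ℝ) (b : Fin 3 → ℝ) : a ⬝ᵥ (c • b) = c * (a ⬝ᵥ b) := by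
  simp [dot_expand]

lemma dot_sum3 {ι : Type*} (s : Finset ι) (a : Fin 3 → ℝ) (g : ι → Fin 3 → ℝ) :
    a ⬝ᵥ (∑ k ∈ s, g k) = ∑ k ∈ s, a ⬝ᵥ g k := by
  simp only [dot_expand, Finset.sum_apply]
  rw [Finset.mul_sum, Finset.mul_sum, Finset.mul_sum, ← Finset.sum_add_distrib,
    ← Finset.sum_add_distrib]

lemma hasDerivAt_dot_self {g : ℝ → Fin 3 → ℝ} {g' : Fin 3 → ℝ} {s : ℝ}
    (h : HasDerivAt g g' s) :
    HasDerivAt (fun τ => g τ ⬝ᵥ g τ) (2 * (g s ⬝ᵥ g')) s := by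
  have hj : ∀ j, HasDerivAt (fun τ => g τ j) (g' j) s := fun j => (hasDerivAt_pi.mp h) j
  have h0 := (hj 0).mul (hj 0)
  have h1 := (hj 1).mul (hj 1)
  have h2 := (hj 2).mul (hj 2)
  have := (h0.add h1).add h2
  have heq : (fun τ => g τ ⬝ᵥ g τ)
      = fun τ => ((fun τ => g τ 0 * g τ 0) τ + (fun τ => g τ 1 * g τ 1) τ)
        + (fun τ => g τ 2 * g τ 2) τ := by
    funext τ; simp [dot_expand]
  rw [heq]
  refine this.congr_deriv ?_
  rw [dot_expand]; ring

lemma continuousOn_sup' {ι : Type*} (s : Finset ι) (hs : s.Nonempty)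
    (g : ι → ℝ → ℝ) (S : Set ℝ) (hg : ∀ i ∈ s, ContinuousOn (g i) S) :
    ContinuousOn (fun z => s.sup' hs (fun i => g i z)) S := by
  induction hs using Finset.Nonempty.cons_induction with
  | singleton i => simpa using hg i (by simp)
  | cons i s hi hs' ih =>
      have : (fun z => (Finset.cons i s hi).sup' (Finset.cons_nonempty hi) (fun j => g j z))
          = fun z => max (g i z) (s.sup' hs' (fun j => g j z)) := by
        funext z; rw [Finset.sup'_cons]
      rw [this]
      have c1 := hg i (Finset.mem_cons_self i s)
      have c2 := ih (fun j hj => hg j (Finset.mem_cons_of_mem hj))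
      exact fun z hz => ((c1 z hz).max (c2 z hz))

lemma isGreatest_range_sup' {ι : Type*} [Fintype ι] [Nonempty ι] (g : ι → ℝ) :
    IsGreatest (Set.range g) (Finset.univ.sup' Finset.univ_nonempty g) := by
  constructor
  · obtain ⟨i, _, hi⟩ := Finset.exists_mem_eq_sup' Finset.univ_nonempty g
    exact ⟨i, hi.symm⟩
  · rintro _ ⟨k, rfl⟩
    exact Finset.le_sup' g (Finset.mem_univ k)

lemma young_ineq {ψm σ a b : ℝ} (h : 0 < ψm) :
    2*(σ*(a*b)) ≤ ψm/2 * a^2 + 2*σ^2/ψm * b^2 := by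
  have h1 : 2*(σ*(a*b)) = (4*ψm*σ*a*b)/(2*ψm) := by field_simp; ring
  have h2 : ψm/2 * a^2 + 2*σ^2/ψm * b^2 = (ψm^2*a^2 + 4*σ^2*b^2)/(2*ψm) := by
    field_simp; ring
  rw [h1, h2]
  refine (div_le_div_iff_of_pos_right (by linarith : (0:ℝ) < 2*ψm)).mpr ?_
  nlinarith [sq_nonneg (ψm*a - 2*σ*b)]


/-- Uniform bound for the maximal velocity of the Cucker–Smale type
flocking model on the unit sphere with inter-particle bonding force: if
`ψ_{ij}(s) ≥ ψ_m > 0` on `[0,t]`, then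
`𝒱²(t) ≤ e^{−ψ_m t/2} 𝒱²(0) + (1 − e^{−ψ_m t/2})(2 sup_{[0,t]} E_K
  + (4σ²/ψ_m²) sup_{[0,t]} 𝒟ₓ²)`. -/
theorem maximal_velocity_bound (N : ℕ) (hN : 1 ≤ N) (σ : ℝ) (hσ : 0 < σ)
    (ψ : ℝ → ℝ) (hψreg : ContDiffOn ℝ 1 ψ (Set.Icc 0 2))
    (hψnn : ∀ s ∈ Set.Icc (0:ℝ) 2, 0 ≤ ψ s)
    (hψanti : StrictAntiOn ψ (Set.Icc 0 2)) (hψ2 : ψ 2 = 0)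
    (x v : Fin N → ℝ → Fin 3 → ℝ)
    (hsph : ∀ i, ∀ s : ℝ, 0 ≤ s → enorm3 (x i s) = 1)
    (htan : ∀ i, ∀ s : ℝ, 0 ≤ s → (x i s) ⬝ᵥ (v i s) = 0)
    (hanti : ∀ i k, ∀ s : ℝ, 0 ≤ s → x i s ≠ -(x k s))
    (hode1 : ∀ i, ∀ s : ℝ, 0 ≤ s → HasDerivAt (x i) (v i s) s)
    (hode2 : ∀ i, ∀ s : ℝ, 0 ≤ s → HasDerivAt (v i)
      ((-(enorm3 (v i s))^2) • x i s
        + (N : ℝ)⁻¹ • ∑ k, ψ (enorm3 (x i s - x k s)) •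
            (rotApply (x k s) (x i s) (v k s) - v i s)
        + (σ / N) • ∑ k, (x k s - ((x i s) ⬝ᵥ (x k s)) • x i s)) s)
    (t : ℝ) (ht : 0 < t) (ψm : ℝ) (hψm : 0 < ψm)
    (hψlow : ∀ i j : Fin N, ∀ s ∈ Set.Icc (0:ℝ) t, ψm ≤ ψ (enorm3 (x i s - x j s)))
    (V Dx EK : ℝ → ℝ)
    (hV : ∀ s, IsGreatest (Set.range fun k => enorm3 (v k s)) (V s))
    (hDx : ∀ s, IsGreatest
      (Set.range fun p : Fin N × Fin N => enorm3 (x p.1 s - x p.2 s)) (Dx s))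
    (hEK : ∀ s, EK s = (N : ℝ)⁻¹ * ∑ k, (enorm3 (v k s))^2) :
    (V t)^2 ≤ Real.exp (-(ψm / 2) * t) * (V 0)^2
      + (1 - Real.exp (-(ψm / 2) * t)) *
        (2 * sSup (EK '' Set.Icc 0 t)
          + 4 * σ^2 / ψm^2 * sSup ((fun s => (Dx s)^2) '' Set.Icc 0 t)) := by
  classical
  have hNpos : 0 < N := hN
  haveI hnefin : Nonempty (Fin N) := ⟨⟨0, hNpos⟩⟩
  have hNne : (N:ℝ) ≠ 0 := Nat.cast_ne_zero.mpr (by omega)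
  have hNpos' : (0:ℝ) < N := Nat.cast_pos.mpr hNpos
  set SE : ℝ := sSup (EK '' Set.Icc 0 t) with hSE
  set SD : ℝ := sSup ((fun s => (Dx s)^2) '' Set.Icc 0 t) with hSD
  set C : ℝ := 2 * SE + 4 * σ^2 / ψm^2 * SD with hC
  set K : ℝ := -(ψm/2) with hK
  set ε : ℝ := (ψm/2) * C with hε
  set f : Fin N → ℝ → ℝ := fun k s => v k s ⬝ᵥ v k s with hfdef
  set W : ℝ → ℝ := fun s => (V s)^2 with hWdef
  set D : Fin N → ℝ → Fin 3 → ℝ := fun i s =>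
    (-(enorm3 (v i s))^2) • x i s
      + (N : ℝ)⁻¹ • ∑ k, ψ (enorm3 (x i s - x k s)) •
          (rotApply (x k s) (x i s) (v k s) - v i s)
      + (σ / N) • ∑ k, (x k s - ((x i s) ⬝ᵥ (x k s)) • x i s) with hDdef
  have hode2' : ∀ i, ∀ s : ℝ, 0 ≤ s → HasDerivAt (v i) (D i s) s := hode2
  -- basic facts
  have hfeq : ∀ k s, f k s = (enorm3 (v k s))^2 := fun k s => (enorm3_sq _).symm
  have hVnn : ∀ s, 0 ≤ V s := by
    intro s
    obtain ⟨k, hk⟩ := (hV s).1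
    rw [← hk]; exact enorm3_nonneg _
  have hfW : ∀ k s, f k s ≤ W s := by
    intro k s
    rw [hfeq]
    exact pow_le_pow_left₀ (enorm3_nonneg _) ((hV s).2 ⟨k, rfl⟩) 2
  have hWmem : ∀ s, ∃ k, f k s = W s := by
    intro s
    obtain ⟨k, hk⟩ := (hV s).1
    exact ⟨k, by rw [hfeq]; exact congrArg (fun y => y^2) hk⟩
  have hDxnn : ∀ s, 0 ≤ Dx s := by
    intro s
    obtain ⟨p, hp⟩ := (hDx s).1
    rw [← hp]; exact enorm3_nonneg _
  have hfd : ∀ k, ∀ s : ℝ, 0 ≤ s → HasDerivAt (f k) (2 * (v k s ⬝ᵥ D k s)) s :=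
    fun k s hs => hasDerivAt_dot_self (hode2' k s hs)
  -- continuity
  have hfcont : ∀ k, ContinuousOn (f k) (Set.Icc 0 t) := by
    intro k s hs
    exact ((hfd k s hs.1).continuousAt).continuousWithinAt
  have hecont : ∀ k, ContinuousOn (fun s => enorm3 (v k s)) (Set.Icc 0 t) := by
    intro k
    exact Real.continuous_sqrt.comp_continuousOn (hfcont k)
  have hVsup : ∀ s, V s = Finset.univ.sup' Finset.univ_nonempty (fun k => enorm3 (v k s)) :=
    fun s => (hV s).unique (isGreatest_range_sup' _)
  have hVcont : ContinuousOn V (Set.Icc 0 t) := by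
    refine (continuousOn_sup' Finset.univ Finset.univ_nonempty
      (fun k s => enorm3 (v k s)) (Set.Icc 0 t) (fun k _ => hecont k)).congr ?_
    intro s _
    exact hVsup s
  have hWcont : ContinuousOn W (Set.Icc 0 t) := hVcont.pow 2
  have hEKcont : ContinuousOn EK (Set.Icc 0 t) := by
    have h1 : ContinuousOn (fun s => (N:ℝ)⁻¹ * ∑ k, (enorm3 (v k s))^2) (Set.Icc 0 t) := by
      refine continuousOn_const.mul ?_
      exact continuousOn_finset_sum Finset.univ (fun k _ => (hecont k).pow 2)
    exact h1.congr (fun s _ => hEK s)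
  have hSEmem : ∀ s ∈ Set.Icc (0:ℝ) t, EK s ≤ SE := by
    intro s hs
    exact le_csSup (isCompact_Icc.bddAbove_image hEKcont) ⟨s, hs, rfl⟩
  have hSDbdd : BddAbove ((fun s => (Dx s)^2) '' Set.Icc 0 t) := by
    refine ⟨4, ?_⟩
    rintro _ ⟨s, hs, rfl⟩
    have h2 : Dx s ≤ 2 := by
      obtain ⟨p, hp⟩ := (hDx s).1
      rw [← hp]
      calc enorm3 (x p.1 s - x p.2 s) ≤ enorm3 (x p.1 s) + enorm3 (x p.2 s) := enorm3_sub_le _ _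
        _ = 2 := by rw [hsph p.1 s hs.1, hsph p.2 s hs.1]; norm_num
    have h3 := hDxnn s
    show Dx s ^ 2 ≤ 4
    nlinarith
  have hSDmem : ∀ s ∈ Set.Icc (0:ℝ) t, (Dx s)^2 ≤ SD := by
    intro s hs
    exact le_csSup hSDbdd ⟨s, hs, rfl⟩
  -- the core differential inequality at max indices
  have hbound : ∀ s ∈ Set.Ico (0:ℝ) t, ∀ i, f i s = W s →
      2 * (v i s ⬝ᵥ D i s) ≤ K * W s + ε := by
    intro s hs i hfi
    have hs0 : (0:ℝ) ≤ s := hs.1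
    have hsIcc : s ∈ Set.Icc (0:ℝ) t := ⟨hs.1, le_of_lt hs.2⟩
    have hax : v i s ⬝ᵥ x i s = 0 := by rw [dot_comm3]; exact htan i s hs0
    have hdot : v i s ⬝ᵥ D i s
        = (N:ℝ)⁻¹ * (∑ k, ψ (enorm3 (x i s - x k s)) *
              ((v i s) ⬝ᵥ rotApply (x k s) (x i s) (v k s) - f i s))
          + (σ / N) * (∑ k, (v i s) ⬝ᵥ (x k s)) := by
      rw [hDdef]
      simp only []
      rw [dot_add3, dot_add3, dot_smul3, dot_smul3, dot_smul3, hax, mul_zero, zero_add]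
      congr 1
      · congr 1
        rw [dot_sum3]
        refine Finset.sum_congr rfl (fun k _ => ?_)
        rw [dot_smul3, dot_sub3]
      · congr 1
        rw [dot_sum3]
        refine Finset.sum_congr rfl (fun k _ => ?_)
        rw [dot_sub3, dot_smul3, hax, mul_zero, sub_zero]
    have hS1 : (∑ k, ψ (enorm3 (x i s - x k s)) *
          ((v i s) ⬝ᵥ rotApply (x k s) (x i s) (v k s) - f i s))
        ≤ ∑ k : Fin N, ψm * ((f k s - W s)/2) := by
      refine Finset.sum_le_sum (fun k _ => ?_)
      have hψk := hψlow i k s hsIcc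
      have hψknn : 0 ≤ ψ (enorm3 (x i s - x k s)) := le_trans hψm.le hψk
      have hd1 : (x k s) ⬝ᵥ (x k s) = 1 := by
        rw [← enorm3_sq, hsph k s hs0]; norm_num
      have hd2 : (x i s) ⬝ᵥ (x i s) = 1 := by
        rw [← enorm3_sq, hsph i s hs0]; norm_num
      have hrot : rotApply (x k s) (x i s) (v k s) ⬝ᵥ rotApply (x k s) (x i s) (v k s)
          = v k s ⬝ᵥ v k s := rot_dot_self (v k s) hd1 hd2 (hanti k i s hs0)
      have hrotnorm : enorm3 (rotApply (x k s) (x i s) (v k s)) = enorm3 (v k s) := by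
        unfold enorm3; rw [hrot]
      have hcs := cauchy3 (v i s) (rotApply (x k s) (x i s) (v k s))
      rw [hrotnorm] at hcs
      have h1 : (v i s) ⬝ᵥ rotApply (x k s) (x i s) (v k s) - f i s ≤ (f k s - W s)/2 := by
        have e1 : f i s = (enorm3 (v i s))^2 := hfeq i s
        have e2 : f k s = (enorm3 (v k s))^2 := hfeq k s
        nlinarith [sq_nonneg (enorm3 (v i s) - enorm3 (v k s))]
      have h2 : (f k s - W s)/2 ≤ 0 := by have := hfW k s; linarith
      calc ψ (enorm3 (x i s - x k s)) * ((v i s) ⬝ᵥ rotApply (x k s) (x i s) (v k s) - f i s)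
          ≤ ψ (enorm3 (x i s - x k s)) * ((f k s - W s)/2) :=
            mul_le_mul_of_nonneg_left h1 hψknn
        _ ≤ ψm * ((f k s - W s)/2) := mul_le_mul_of_nonpos_right hψk h2
    have hsum1 : ∑ k : Fin N, ψm * ((f k s - W s)/2)
        = (ψm/2) * ((∑ k, f k s) - N * W s) := by
      rw [Finset.sum_congr rfl (fun k _ => show ψm * ((f k s - W s)/2)
          = (ψm/2) * f k s - (ψm/2) * W s by ring)]
      rw [Finset.sum_sub_distrib, Finset.sum_const, Finset.card_univ, Fintype.card_fin,
        nsmul_eq_mul, ← Finset.mul_sum]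
      ring
    have hEKs : (N:ℝ)⁻¹ * (∑ k, f k s) = EK s := by
      rw [hEK s]
      congr 1
      exact Finset.sum_congr rfl (fun k _ => hfeq k s)
    have hA1 : (N:ℝ)⁻¹ * (∑ k, ψ (enorm3 (x i s - x k s)) *
          ((v i s) ⬝ᵥ rotApply (x k s) (x i s) (v k s) - f i s))
        ≤ (ψm/2) * (EK s - W s) := by
      have step1 : (N:ℝ)⁻¹ * (∑ k, ψ (enorm3 (x i s - x k s)) *
            ((v i s) ⬝ᵥ rotApply (x k s) (x i s) (v k s) - f i s))
          ≤ (N:ℝ)⁻¹ * ((ψm/2) * ((∑ k, f k s) - N * W s)) := by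
        rw [← hsum1]
        exact mul_le_mul_of_nonneg_left hS1 (by positivity)
      have hinv : (N:ℝ)⁻¹ * ((N:ℝ) * W s) = W s := by
        rw [← mul_assoc, inv_mul_cancel₀ hNne, one_mul]
      have step2 : (N:ℝ)⁻¹ * ((ψm/2) * ((∑ k, f k s) - N * W s))
          = (ψm/2) * ((N:ℝ)⁻¹ * (∑ k, f k s) - W s) := by
        rw [show (N:ℝ)⁻¹ * ((ψm/2) * ((∑ k, f k s) - N * W s))
            = (ψm/2) * ((N:ℝ)⁻¹ * (∑ k, f k s) - (N:ℝ)⁻¹ * ((N:ℝ) * W s)) from by ring, hinv]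
      rw [step2, hEKs] at step1
      exact step1
    have hS2 : (∑ k, (v i s) ⬝ᵥ (x k s)) ≤ (N:ℝ) * (V s * Dx s) := by
      have hterm : ∀ k : Fin N, (v i s) ⬝ᵥ (x k s) ≤ V s * Dx s := by
        intro k
        have e : (v i s) ⬝ᵥ (x k s) = (v i s) ⬝ᵥ (x k s - x i s) := by
          rw [dot_sub3, hax, sub_zero]
        rw [e]
        calc (v i s) ⬝ᵥ (x k s - x i s) ≤ enorm3 (v i s) * enorm3 (x k s - x i s) :=
              cauchy3 _ _
          _ ≤ V s * Dx s :=
              mul_le_mul ((hV s).2 ⟨i, rfl⟩) ((hDx s).2 ⟨(k,i), rfl⟩)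
                (enorm3_nonneg _) (hVnn s)
      calc (∑ k, (v i s) ⬝ᵥ (x k s)) ≤ ∑ _k : Fin N, V s * Dx s :=
            Finset.sum_le_sum (fun k _ => hterm k)
        _ = (N:ℝ) * (V s * Dx s) := by
            rw [Finset.sum_const, Finset.card_univ, Fintype.card_fin, nsmul_eq_mul]
    have hA2 : (σ / N) * (∑ k, (v i s) ⬝ᵥ (x k s)) ≤ σ * (V s * Dx s) := by
      have h1 : (σ / N) * (∑ k, (v i s) ⬝ᵥ (x k s)) ≤ (σ / N) * ((N:ℝ) * (V s * Dx s)) :=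
        mul_le_mul_of_nonneg_left hS2 (le_of_lt (div_pos hσ hNpos'))
      have h2 : (σ / N) * ((N:ℝ) * (V s * Dx s)) = σ * (V s * Dx s) := by
        rw [div_eq_mul_inv, mul_assoc, ← mul_assoc ((N:ℝ)⁻¹), inv_mul_cancel₀ hNne, one_mul]
      rw [h2] at h1
      exact h1
    have hVD : 2 * (σ * (V s * Dx s)) ≤ ψm/2 * W s + 2*σ^2/ψm * (Dx s)^2 := by
      have hVsq : (V s)^2 = W s := rfl
      rw [← hVsq]
      exact young_ineq hψm
    have hεval : ε = ψm * SE + 2*σ^2/ψm * SD := by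
      rw [hε, hC]
      have hψne : ψm ≠ 0 := ne_of_gt hψm
      field_simp
      ring
    have hEKle := hSEmem s hsIcc
    have hDxle2 := hSDmem s hsIcc
    have hm1 : ψm * EK s ≤ ψm * SE := mul_le_mul_of_nonneg_left hEKle hψm.le
    have hm2 : 2*σ^2/ψm * (Dx s)^2 ≤ 2*σ^2/ψm * SD :=
      mul_le_mul_of_nonneg_left hDxle2 (by positivity)
    rw [hdot, hK, hεval]
    linarith [hA1, hA2, hVD, hm1, hm2]
  -- slope condition for Gronwall
  have hslope : ∀ s ∈ Set.Ico (0:ℝ) t, ∀ r, K * W s + ε < r →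
      ∃ᶠ z in nhdsWithin s (Set.Ioi s), (z - s)⁻¹ * (W z - W s) < r := by
    intro s hs r hr
    have hs0 : (0:ℝ) ≤ s := hs.1
    -- find an index achieving the max frequently to the right
    have hfreq : ∃ k, ∃ᶠ z in nhdsWithin s (Set.Ioi s), W z = f k z := by
      by_contra hcon
      push_neg at hcon
      have hev : ∀ᶠ z in nhdsWithin s (Set.Ioi s), ∀ k, ¬(W z = f k z) := by
        rw [Filter.eventually_all]
        intro k
        exact hcon k
      obtain ⟨z, hz⟩ := hev.exists
      obtain ⟨k, hk⟩ := hWmem z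
      exact hz k hk.symm
    obtain ⟨k, hfreqk⟩ := hfreq
    have hkx : f k s = W s := by
      refine le_antisymm (hfW k s) ?_
      have hl : Filter.NeBot (nhdsWithin s (Set.Ioi s) ⊓ Filter.principal {z | W z = f k z}) :=
        Filter.frequently_iff_neBot.mp hfreqk
      obtain ⟨i0, hi0⟩ := hWmem s
      have htend : Filter.Tendsto (fun z => f k z - f i0 z)
          (nhdsWithin s (Set.Ioi s) ⊓ Filter.principal {z | W z = f k z})
          (nhds (f k s - f i0 s)) := by
        have hck : ContinuousAt (f k) s := (hfd k s hs0).continuousAt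
        have hci : ContinuousAt (f i0) s := (hfd i0 s hs0).continuousAt
        exact (hck.sub hci).tendsto.mono_left (le_trans inf_le_left nhdsWithin_le_nhds)
      have hge : 0 ≤ f k s - f i0 s := by
        refine ge_of_tendsto htend ?_
        have h2 : ∀ᶠ z in nhdsWithin s (Set.Ioi s) ⊓ Filter.principal {z | W z = f k z},
            W z = f k z := by
          exact Filter.eventually_inf_principal.mpr (Filter.Eventually.of_forall fun z hz => hz)
        filter_upwards [h2] with z hWz
        have := hfW i0 z
        linarith
      rw [← hi0]
      linarith
    have hd := hfd k s hs0
    have hdle : 2 * (v k s ⬝ᵥ D k s) ≤ K * W s + ε := hbound s hs k hkx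
    have hslopek : Filter.Tendsto (slope (f k) s) (nhdsWithin s (Set.Ioi s))
        (nhds (2 * (v k s ⬝ᵥ D k s))) :=
      (hasDerivAt_iff_tendsto_slope.mp hd).mono_left
        (nhdsWithin_mono s (fun z hz => ne_of_gt hz))
    have hev : ∀ᶠ z in nhdsWithin s (Set.Ioi s), slope (f k) s z < r :=
      hslopek.eventually_lt_const (lt_of_le_of_lt hdle hr)
    refine (hfreqk.and_eventually hev).mono ?_
    rintro z ⟨hWz, hslz⟩
    have heq : (z - s)⁻¹ * (W z - W s) = slope (f k) s z := by
      rw [slope_def_field, hWz, ← hkx, div_eq_inv_mul]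
    rw [heq]
    exact hslz
  -- apply Gronwall
  have hKne : K ≠ 0 := by
    rw [hK]
    have : (0:ℝ) < ψm/2 := by linarith
    exact neg_ne_zero.mpr (ne_of_gt this)
  have hmain := le_gronwallBound_of_liminf_deriv_right_le (f := W)
    (f' := fun z => K * W z + ε) (δ := W 0) (K := K) (ε := ε) (a := 0) (b := t)
    hWcont hslope (le_refl (W 0)) (fun z _ => le_refl _) t (Set.right_mem_Icc.mpr ht.le)
  simp only [gronwallBound_of_K_ne_0 hKne, sub_zero] at hmain
  have hεK : ε / K = -C := by
    rw [hε, hK, div_neg, mul_comm (ψm/2) C, mul_div_assoc,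
      div_self (ne_of_gt (by linarith : (0:ℝ) < ψm/2)), mul_one]
  have hfinal : W 0 * Real.exp (K * t) + ε / K * (Real.exp (K * t) - 1)
      = Real.exp (-(ψm / 2) * t) * (V 0)^2 + (1 - Real.exp (-(ψm / 2) * t)) * C := by
    rw [hεK, hK]
    have : W 0 = (V 0)^2 := rfl
    rw [this]
    ring
  rw [hfinal] at hmain
  exact hmain
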